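/- arXiv:1605.00361 — 3 statements merged into one kernel-verified Lean document; each statement's English description precedes it below -/
import Mathlib

section
/- For the one-dimensional orthogonal polynomial ensemble of N points associated with the equilibrium measure μ_eq, and for any k, ℓ ≥ 1 with N > max(k, ℓ), the covariance of the linear statistics ∑_i T_k(x_i) and ∑_i T_ℓ(x_i) equals (k/2)·δ_{kℓ}; if k = 0 or ℓ = 0 the covariance is 0. -/
open MeasureTheory

/-- The normalized Chebyshev polynomials of the first kind on `[-1,1]`. -/
noncomputable def nT (k : ℕ) (x : ℝ) : ℝ :=
  if k = 0 then 1 else Real.sqrt 2 * Real.cos (k * Real.arccos x)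

/-- Density of the arcsine (equilibrium) measure on `[-1,1]`. -/
noncomputable def weq (x : ℝ) : ℝ := 1 / (Real.pi * Real.sqrt (1 - x ^ 2))

/-- Christoffel–Darboux kernel of the arcsine measure. -/
noncomputable def KCheb (N : ℕ) (x y : ℝ) : ℝ :=
  ∑ i ∈ Finset.range N, nT i x * nT i y

/-- Covariance of the linear statistics `∑ f(x_i)` and `∑ g(x_i)` for the determinantal
orthogonal polynomial ensemble of `N` points with kernel `K_N` and reference measure `μ_eq`:
`Cov = ∫ f g K_N(x,x) dμ_eq − ∬ f(x) g(y) K_N(x,y)² dμ_eq(x) dμ_eq(y)`. -/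
noncomputable def covOPE (N : ℕ) (f g : ℝ → ℝ) : ℝ :=
  (∫ x in Set.Icc (-1 : ℝ) 1, f x * g x * KCheb N x x * weq x) -
    ∫ x in Set.Icc (-1 : ℝ) 1, ∫ y in Set.Icc (-1 : ℝ) 1,
      f x * g y * (KCheb N x y) ^ 2 * weq x * weq y

/-- Cosine-side version of `nT`. -/
noncomputable def cT (k : ℕ) (θ : ℝ) : ℝ :=
  if k = 0 then 1 else Real.sqrt 2 * Real.cos (k * θ)

@[continuity, fun_prop]
lemma cT_cont (k : ℕ) : Continuous (cT k) := by
  unfold cT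
  by_cases h : k = 0 <;> simp only [h, if_true, if_false] <;> fun_prop

lemma transfer (F : ℝ → ℝ) :
    ∫ x in Set.Icc (-1 : ℝ) 1, F (Real.arccos x) * weq x
      = (1 / Real.pi) * ∫ θ in (0:ℝ)..Real.pi, F θ := by
  have himg : Real.cos '' Set.Ioo 0 Real.pi = Set.Ioo (-1 : ℝ) 1 := by
    ext x
    constructor
    · rintro ⟨θ, ⟨h0, hπ⟩, rfl⟩
      constructor
      · have := Real.strictAntiOn_cos ⟨le_of_lt h0, le_of_lt hπ⟩
          ⟨Real.pi_pos.le, le_refl _⟩ hπ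
        simpa [Real.cos_pi] using this
      · have := Real.strictAntiOn_cos ⟨le_refl (0:ℝ), Real.pi_pos.le⟩
          ⟨le_of_lt h0, le_of_lt hπ⟩ h0
        simpa [Real.cos_zero] using this
    · rintro ⟨h1, h2⟩
      refine ⟨Real.arccos x, ⟨Real.arccos_pos.2 h2, ?_⟩,
        Real.cos_arccos (le_of_lt h1) (le_of_lt h2)⟩
      refine lt_of_le_of_ne (Real.arccos_le_pi x) fun h => ?_
      rw [Real.arccos_eq_pi] at h; linarith
  rw [integral_Icc_eq_integral_Ioo, ← himg,
    integral_image_eq_integral_abs_deriv_smul measurableSet_Ioo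
      (fun θ _ => (Real.hasDerivAt_cos θ).hasDerivWithinAt)
      (Real.injOn_cos.mono Set.Ioo_subset_Icc_self) _]
  have hcongr : ∀ θ ∈ Set.Ioo (0:ℝ) Real.pi,
      |(-Real.sin θ)| • (F (Real.arccos (Real.cos θ)) * weq (Real.cos θ))
        = (1 / Real.pi) * F θ := by
    intro θ ⟨h0, hπ⟩
    have hs : 0 < Real.sin θ := Real.sin_pos_of_pos_of_lt_pi h0 hπ
    rw [Real.arccos_cos h0.le hπ.le]
    have hw : weq (Real.cos θ) = 1 / (Real.pi * Real.sin θ) := by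
      rw [weq, ← Real.sin_sq, Real.sqrt_sq hs.le]
    rw [hw, abs_neg, abs_of_pos hs, smul_eq_mul]
    field_simp
  rw [setIntegral_congr_fun measurableSet_Ioo hcongr]
  rw [intervalIntegral.integral_of_le Real.pi_pos.le, integral_Ioc_eq_integral_Ioo,
    ← integral_const_mul]

lemma IcosZ (n : ℤ) (hn : n ≠ 0) :
    ∫ θ in (0:ℝ)..Real.pi, Real.cos (n * θ) = 0 := by
  have hc : ((n:ℝ)) ≠ 0 := Int.cast_ne_zero.2 hn
  rw [intervalIntegral.integral_comp_mul_left Real.cos hc]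
  rw [integral_cos]
  simp [Real.sin_int_mul_pi]

lemma Icos (n : ℤ) :
    ∫ θ in (0:ℝ)..Real.pi, Real.cos (n * θ) = if n = 0 then Real.pi else 0 := by
  split_ifs with h
  · subst h; simp
  · exact IcosZ n h

lemma cos_prod (x y : ℝ) :
    (Real.sqrt 2 * Real.cos x) * (Real.sqrt 2 * Real.cos y)
      = Real.cos (x + y) + Real.cos (x - y) := by
  have hs : Real.sqrt 2 * Real.sqrt 2 = 2 := Real.mul_self_sqrt (by norm_num)
  rw [Real.cos_add, Real.cos_sub]
  linear_combination (Real.cos x * Real.cos y) * hs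

lemma P2 (a b : ℕ) :
    ∫ θ in (0:ℝ)..Real.pi, cT a θ * cT b θ = if a = b then Real.pi else 0 := by
  by_cases ha : a = 0 <;> by_cases hb : b = 0
  · subst ha; subst hb; simp [cT]
  · subst ha
    have key : ∀ θ : ℝ, cT 0 θ * cT b θ = Real.sqrt 2 * Real.cos ((b:ℤ) * θ) := by
      intro θ; simp [cT, hb]
    simp only [key]
    rw [intervalIntegral.integral_const_mul, IcosZ b (by exact_mod_cast hb)]
    simp [Ne.symm hb]
  · subst hb
    have key : ∀ θ : ℝ, cT a θ * cT 0 θ = Real.sqrt 2 * Real.cos ((a:ℤ) * θ) := by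
      intro θ; simp [cT, ha]
    simp only [key]
    rw [intervalIntegral.integral_const_mul, IcosZ a (by exact_mod_cast ha)]
    simp [ha]
  · have key : ∀ θ : ℝ, cT a θ * cT b θ
        = Real.cos ((((a:ℤ)+b) : ℤ) * θ) + Real.cos ((((a:ℤ)-b) : ℤ) * θ) := by
      intro θ
      simp only [cT, if_neg ha, if_neg hb]
      rw [cos_prod]
      push_cast
      ring_nf
    simp only [key]
    rw [intervalIntegral.integral_add
      ((by fun_prop : Continuous fun θ : ℝ => Real.cos ((((a:ℤ)+b):ℤ) * θ)).intervalIntegrable _ _)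
      ((by fun_prop : Continuous fun θ : ℝ => Real.cos ((((a:ℤ)-b):ℤ) * θ)).intervalIntegrable _ _),
      Icos, Icos]
    have h1 : ((a:ℤ)+b) ≠ 0 := by omega
    rw [if_neg h1]
    by_cases hab : a = b
    · subst hab; simp
    · have h2 : ((a:ℤ)-b) ≠ 0 := by omega
      rw [if_neg h2, if_neg hab]; ring

/-- coefficients of `cT k * cT i` in the basis `(cT m)`. -/
noncomputable def coeff (k i m : ℕ) : ℝ :=
  if k = 0 then (if m = i then 1 else 0)
  else if i = 0 then (if m = k then 1 else 0)
  else if i = k then (if m = 0 then 1 else 0) + (if m = 2 * k then (Real.sqrt 2)⁻¹ else 0)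
  else (Real.sqrt 2)⁻¹ *
    ((if m = i + k then 1 else 0) + (if m = max i k - min i k then 1 else 0))

lemma coeff_zero_left (i m : ℕ) : coeff 0 i m = if m = i then 1 else 0 := by
  simp [coeff]

lemma coeff_i_zero (k m : ℕ) (hk : k ≠ 0) : coeff k 0 m = if m = k then 1 else 0 := by
  simp [coeff, hk]

lemma coeff_diag (k m : ℕ) (hk : k ≠ 0) :
    coeff k k m = (if m = 0 then 1 else 0) + (if m = 2 * k then (Real.sqrt 2)⁻¹ else 0) := by
  simp [coeff, hk]

lemma coeff_gen (k i m : ℕ) (hk : k ≠ 0) (hi : i ≠ 0) (hik : i ≠ k) :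
    coeff k i m = (Real.sqrt 2)⁻¹ *
      ((if m = i + k then 1 else 0) + (if m = max i k - min i k then 1 else 0)) := by
  simp [coeff, hk, hi, hik]

lemma sum_delta_mul (M a : ℕ) (hA : a < M) (v : ℝ) (f : ℕ → ℝ) :
    ∑ m ∈ Finset.range M, (if m = a then v else 0) * f m = v * f a := by
  rw [Finset.sum_congr rfl (fun m _ => by rw [ite_mul, zero_mul] :
    ∀ m ∈ Finset.range M, (if m = a then v else 0) * f m = if m = a then v * f m else 0)]
  rw [Finset.sum_ite_eq' (Finset.range M) a (fun m => v * f m)]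
  simp [hA]

lemma expand (k i M : ℕ) (hM : i + k < M) (θ : ℝ) :
    cT k θ * cT i θ = ∑ m ∈ Finset.range M, coeff k i m * cT m θ := by
  have hs : Real.sqrt 2 * Real.sqrt 2 = 2 := Real.mul_self_sqrt (by norm_num)
  have hs0 : Real.sqrt 2 ≠ 0 := by positivity
  by_cases hk : k = 0
  · subst hk
    simp only [coeff_zero_left]
    rw [sum_delta_mul M i (by omega)]
    simp [cT]
  · by_cases hi : i = 0
    · subst hi
      simp only [coeff_i_zero _ _ hk]
      rw [sum_delta_mul M k (by omega)]
      simp [cT, mul_comm]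
    · by_cases hik : i = k
      · subst hik
        simp only [coeff_diag _ _ hk]
        rw [Finset.sum_congr rfl (fun m _ => add_mul _ _ _), Finset.sum_add_distrib,
          sum_delta_mul M 0 (by omega), sum_delta_mul M (2*i) (by omega)]
        have h2i : (2*i : ℕ) ≠ 0 := by omega
        simp only [cT, if_neg hi, if_pos rfl, if_neg h2i]
        have : Real.cos ((2*i : ℕ) * θ) = 2 * Real.cos ((i:ℝ)*θ)^2 - 1 := by
          push_cast
          rw [show ((2:ℝ)*i*θ) = 2*((i:ℝ)*θ) by ring, Real.cos_two_mul]
        rw [this]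
        field_simp
        rw [if_pos trivial]
        nlinarith [hs, Real.sq_sqrt (by norm_num : (2:ℝ) ≥ 0)]
      · simp only [coeff_gen _ _ _ hk hi hik]
        rw [Finset.sum_congr rfl
          (fun m _ => by rw [mul_add, add_mul] :
            ∀ m ∈ Finset.range M, ((Real.sqrt 2)⁻¹ *
              ((if m = i + k then 1 else 0) + (if m = max i k - min i k then 1 else 0))) * cT m θ
              = ((Real.sqrt 2)⁻¹ * (if m = i + k then 1 else 0)) * cT m θ
                + ((Real.sqrt 2)⁻¹ * (if m = max i k - min i k then 1 else 0)) * cT m θ)]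
        rw [Finset.sum_add_distrib]
        rw [Finset.sum_congr rfl (fun m _ => by rw [mul_ite, mul_one, mul_zero] :
          ∀ m ∈ Finset.range M, ((Real.sqrt 2)⁻¹ * (if m = i + k then 1 else 0)) * cT m θ
            = (if m = i + k then (Real.sqrt 2)⁻¹ else 0) * cT m θ)]
        rw [Finset.sum_congr rfl (fun m _ => by rw [mul_ite, mul_one, mul_zero] :
          ∀ m ∈ Finset.range M, ((Real.sqrt 2)⁻¹ * (if m = max i k - min i k then 1 else 0)) * cT m θ
            = (if m = max i k - min i k then (Real.sqrt 2)⁻¹ else 0) * cT m θ)]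
        rw [sum_delta_mul M (i+k) (by omega), sum_delta_mul M (max i k - min i k) (by omega)]
        have hik0 : (i + k : ℕ) ≠ 0 := by omega
        have hd0 : (max i k - min i k : ℕ) ≠ 0 := by omega
        simp only [cT, if_neg hk, if_neg hi, if_neg hik0, if_neg hd0]
        have hd : Real.cos ((max i k - min i k : ℕ) * θ) = Real.cos ((k:ℝ)*θ - (i:ℝ)*θ) := by
          rcases le_or_gt i k with h | h
          · have : (max i k - min i k : ℕ) = k - i := by omega
            rw [this]
            congr 1
            push_cast [Nat.cast_sub h]
            ring
          · have : (max i k - min i k : ℕ) = i - k := by omega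
            rw [this, ← Real.cos_neg]
            congr 1
            push_cast [Nat.cast_sub h.le]
            ring
        rw [cos_prod ((k:ℝ)*θ) ((i:ℝ)*θ), hd]
        have h1 : Real.cos ((i+k : ℕ) * θ) = Real.cos ((k:ℝ)*θ + (i:ℝ)*θ) := by
          congr 1; push_cast; ring
        rw [h1]
        field_simp

lemma iiT (f : ℝ → ℝ) (hf : Continuous f) :
    IntervalIntegrable f MeasureTheory.volume 0 Real.pi := hf.intervalIntegrable _ _

lemma P3eval (a b c : ℕ) :
    ∫ θ in (0:ℝ)..Real.pi, cT a θ * cT b θ * cT c θ = Real.pi * coeff a b c := by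
  set M := b + a + 1 + c with hMdef
  have key : ∀ θ : ℝ, cT a θ * cT b θ * cT c θ
      = ∑ m ∈ Finset.range M, coeff a b m * (cT m θ * cT c θ) := by
    intro θ
    rw [expand a b M (by omega) θ, Finset.sum_mul]
    exact Finset.sum_congr rfl fun m _ => by ring
  simp only [key]
  rw [intervalIntegral.integral_finset_sum (fun m _ =>
    iiT _ (by continuity : Continuous fun θ => coeff a b m * (cT m θ * cT c θ)))]
  have : ∀ m ∈ Finset.range M,
      (∫ θ in (0:ℝ)..Real.pi, coeff a b m * (cT m θ * cT c θ))
        = coeff a b m * (if m = c then Real.pi else 0) := by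
    intro m _
    rw [intervalIntegral.integral_const_mul, P2]
  rw [Finset.sum_congr rfl this]
  rw [Finset.sum_congr rfl (fun m _ => by rw [mul_ite, mul_zero] :
    ∀ m ∈ Finset.range M, coeff a b m * (if m = c then Real.pi else 0)
      = if m = c then coeff a b m * Real.pi else 0)]
  rw [Finset.sum_ite_eq' (Finset.range M) c (fun m => coeff a b m * Real.pi)]
  simp only [Finset.mem_range]
  rw [if_pos (by omega)]
  ring

lemma P4 (k l i M : ℕ) (hM : i + k < M) :
    ∫ θ in (0:ℝ)..Real.pi, (cT k θ * cT i θ) * (cT l θ * cT i θ)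
      = Real.pi * ∑ m ∈ Finset.range M, coeff k i m * coeff l i m := by
  have key : ∀ θ : ℝ, (cT k θ * cT i θ) * (cT l θ * cT i θ)
      = ∑ m ∈ Finset.range M, coeff k i m * (cT l θ * cT i θ * cT m θ) := by
    intro θ
    rw [expand k i M hM θ, Finset.sum_mul]
    exact Finset.sum_congr rfl fun m _ => by ring
  simp only [key]
  rw [intervalIntegral.integral_finset_sum (fun m _ =>
    iiT _ (by continuity : Continuous fun θ => coeff k i m * (cT l θ * cT i θ * cT m θ)))]
  have : ∀ m ∈ Finset.range M,
      (∫ θ in (0:ℝ)..Real.pi, coeff k i m * (cT l θ * cT i θ * cT m θ))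
        = coeff k i m * (Real.pi * coeff l i m) := by
    intro m _
    rw [intervalIntegral.integral_const_mul, P3eval]
  rw [Finset.sum_congr rfl this, Finset.mul_sum]
  exact Finset.sum_congr rfl fun m _ => by ring

lemma inner_eval (l N : ℕ) (a : ℕ → ℝ) :
    ∫ φ in (0:ℝ)..Real.pi, cT l φ * (∑ i ∈ Finset.range N, a i * cT i φ)^2
      = Real.pi * ∑ i ∈ Finset.range N, ∑ j ∈ Finset.range N, a i * a j * coeff l i j := by
  have key : ∀ φ : ℝ, cT l φ * (∑ i ∈ Finset.range N, a i * cT i φ)^2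
      = ∑ i ∈ Finset.range N, ∑ j ∈ Finset.range N,
          a i * a j * (cT l φ * cT i φ * cT j φ) := by
    intro φ
    rw [sq, Finset.sum_mul_sum, Finset.mul_sum]
    refine Finset.sum_congr rfl fun i _ => ?_
    rw [Finset.mul_sum]
    exact Finset.sum_congr rfl fun j _ => by ring
  simp only [key]
  rw [intervalIntegral.integral_finset_sum (fun i _ =>
    iiT _ (by continuity : Continuous fun φ => ∑ j ∈ Finset.range N,
      a i * a j * (cT l φ * cT i φ * cT j φ)))]
  have step : ∀ i ∈ Finset.range N,
      (∫ φ in (0:ℝ)..Real.pi, ∑ j ∈ Finset.range N, a i * a j * (cT l φ * cT i φ * cT j φ))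
        = Real.pi * ∑ j ∈ Finset.range N, a i * a j * coeff l i j := by
    intro i _
    rw [intervalIntegral.integral_finset_sum (fun j _ =>
      iiT _ (by continuity : Continuous fun φ => a i * a j * (cT l φ * cT i φ * cT j φ)))]
    rw [Finset.mul_sum]
    refine Finset.sum_congr rfl fun j _ => ?_
    rw [intervalIntegral.integral_const_mul, P3eval]
    ring
  rw [Finset.sum_congr rfl step, Finset.mul_sum]

lemma term1 (N k l : ℕ) :
    ∫ x in Set.Icc (-1:ℝ) 1, nT k x * nT l x * KCheb N x x * weq x
      = ∑ i ∈ Finset.range N, ∑ m ∈ Finset.range (N + k + l), coeff k i m * coeff l i m := by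
  have h0 : (∫ x in Set.Icc (-1:ℝ) 1, nT k x * nT l x * KCheb N x x * weq x)
      = ∫ x in Set.Icc (-1:ℝ) 1,
          (fun θ => cT k θ * cT l θ * ∑ i ∈ Finset.range N, cT i θ * cT i θ)
            (Real.arccos x) * weq x := rfl
  rw [h0, transfer (fun θ => cT k θ * cT l θ * ∑ i ∈ Finset.range N, cT i θ * cT i θ)]
  have hint : ∀ θ : ℝ, cT k θ * cT l θ * ∑ i ∈ Finset.range N, cT i θ * cT i θ
      = ∑ i ∈ Finset.range N, (cT k θ * cT i θ) * (cT l θ * cT i θ) := by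
    intro θ
    rw [Finset.mul_sum]
    exact Finset.sum_congr rfl fun i _ => by ring
  simp only [hint]
  rw [intervalIntegral.integral_finset_sum (fun i _ =>
    iiT _ (by continuity : Continuous fun θ => (cT k θ * cT i θ) * (cT l θ * cT i θ)))]
  have step : ∀ i ∈ Finset.range N,
      (∫ θ in (0:ℝ)..Real.pi, (cT k θ * cT i θ) * (cT l θ * cT i θ))
        = Real.pi * ∑ m ∈ Finset.range (N + k + l), coeff k i m * coeff l i m := by
    intro i hi
    simp only [Finset.mem_range] at hi
    exact P4 k l i (N + k + l) (by omega)
  rw [Finset.sum_congr rfl step, ← Finset.mul_sum, ← mul_assoc, one_div,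
    inv_mul_cancel₀ Real.pi_ne_zero, one_mul]

lemma term2 (N k l : ℕ) :
    (∫ x in Set.Icc (-1:ℝ) 1, ∫ y in Set.Icc (-1:ℝ) 1,
        nT k x * nT l y * (KCheb N x y) ^ 2 * weq x * weq y)
      = ∑ i ∈ Finset.range N, ∑ j ∈ Finset.range N, coeff k i j * coeff l i j := by
  have hx : ∀ x : ℝ,
      (∫ y in Set.Icc (-1:ℝ) 1, nT k x * nT l y * (KCheb N x y) ^ 2 * weq x * weq y)
        = nT k x * weq x *
            ∑ i ∈ Finset.range N, ∑ j ∈ Finset.range N,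
              nT i x * nT j x * coeff l i j := by
    intro x
    have h0 : (∫ y in Set.Icc (-1:ℝ) 1, nT k x * nT l y * (KCheb N x y) ^ 2 * weq x * weq y)
        = ∫ y in Set.Icc (-1:ℝ) 1,
            (fun φ => nT k x * cT l φ *
              (∑ i ∈ Finset.range N, nT i x * cT i φ) ^ 2 * weq x)
              (Real.arccos y) * weq y := rfl
    rw [h0, transfer (fun φ => nT k x * cT l φ *
      (∑ i ∈ Finset.range N, nT i x * cT i φ) ^ 2 * weq x)]
    have h1 : (∫ φ in (0:ℝ)..Real.pi,
        nT k x * cT l φ * (∑ i ∈ Finset.range N, nT i x * cT i φ) ^ 2 * weq x)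
          = (nT k x * weq x) *
            ∫ φ in (0:ℝ)..Real.pi, cT l φ * (∑ i ∈ Finset.range N, nT i x * cT i φ) ^ 2 := by
      rw [← intervalIntegral.integral_const_mul]
      apply intervalIntegral.integral_congr
      intro φ _
      ring
    rw [h1]
    have h2 := inner_eval l N (fun i => nT i x)
    rw [h2]
    have hπ := Real.pi_ne_zero
    field_simp
  simp only [hx]
  have h3 : (∫ x in Set.Icc (-1:ℝ) 1,
      nT k x * weq x * ∑ i ∈ Finset.range N, ∑ j ∈ Finset.range N,
        nT i x * nT j x * coeff l i j)
      = ∫ x in Set.Icc (-1:ℝ) 1,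
          (fun θ => cT k θ * ∑ i ∈ Finset.range N, ∑ j ∈ Finset.range N,
            cT i θ * cT j θ * coeff l i j) (Real.arccos x) * weq x := by
    apply setIntegral_congr_fun measurableSet_Icc
    intro x _
    show nT k x * weq x * (∑ i ∈ Finset.range N, ∑ j ∈ Finset.range N,
        nT i x * nT j x * coeff l i j)
      = nT k x * (∑ i ∈ Finset.range N, ∑ j ∈ Finset.range N,
        nT i x * nT j x * coeff l i j) * weq x
    ring
  rw [h3, transfer (fun θ => cT k θ * ∑ i ∈ Finset.range N, ∑ j ∈ Finset.range N,
    cT i θ * cT j θ * coeff l i j)]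
  have hint : ∀ θ : ℝ, cT k θ * ∑ i ∈ Finset.range N, ∑ j ∈ Finset.range N,
      cT i θ * cT j θ * coeff l i j
      = ∑ i ∈ Finset.range N, ∑ j ∈ Finset.range N,
          coeff l i j * (cT k θ * cT i θ * cT j θ) := by
    intro θ
    rw [Finset.mul_sum]
    refine Finset.sum_congr rfl fun i _ => ?_
    rw [Finset.mul_sum]
    exact Finset.sum_congr rfl fun j _ => by ring
  simp only [hint]
  rw [intervalIntegral.integral_finset_sum (fun i _ =>
    iiT _ (by continuity : Continuous fun θ => ∑ j ∈ Finset.range N,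
      coeff l i j * (cT k θ * cT i θ * cT j θ)))]
  have step : ∀ i ∈ Finset.range N,
      (∫ θ in (0:ℝ)..Real.pi, ∑ j ∈ Finset.range N,
        coeff l i j * (cT k θ * cT i θ * cT j θ))
        = Real.pi * ∑ j ∈ Finset.range N, coeff k i j * coeff l i j := by
    intro i _
    rw [intervalIntegral.integral_finset_sum (fun j _ =>
      iiT _ (by continuity : Continuous fun θ => coeff l i j * (cT k θ * cT i θ * cT j θ)))]
    rw [Finset.mul_sum]
    refine Finset.sum_congr rfl fun j _ => ?_
    rw [intervalIntegral.integral_const_mul, P3eval]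
    ring
  rw [Finset.sum_congr rfl step, ← Finset.mul_sum, ← mul_assoc, one_div,
    inv_mul_cancel₀ Real.pi_ne_zero, one_mul]

lemma master (N k l : ℕ) :
    covOPE N (nT k) (nT l)
      = ∑ i ∈ Finset.range N, ∑ m ∈ Finset.Ico N (N + k + l), coeff k i m * coeff l i m := by
  unfold covOPE
  rw [term1, term2, ← Finset.sum_sub_distrib]
  refine Finset.sum_congr rfl fun i _ => ?_
  have h := Finset.sum_range_add_sum_Ico (fun m => coeff k i m * coeff l i m)
    (show N ≤ N + k + l by omega)
  linarith

lemma coeff_large (k i m : ℕ) (him : i < m) (hkm : k < m) :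
    coeff k i m = if 1 ≤ i ∧ m = i + k then (Real.sqrt 2)⁻¹ else 0 := by
  unfold coeff
  split_ifs <;> first | rfl | omega | simp_all

lemma inv_sqrt_two_sq : (Real.sqrt 2)⁻¹ * (Real.sqrt 2)⁻¹ = (2:ℝ)⁻¹ := by
  rw [← mul_inv, Real.mul_self_sqrt (by norm_num)]

/-- For the Chebyshev (equilibrium measure) orthogonal polynomial ensemble of `N` points:
for `k, ℓ ≥ 1` with `N > max(k,ℓ)`, `Cov[∑ T_k(x_i), ∑ T_ℓ(x_i)] = (k/2) δ_{kℓ}`;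
and the covariance vanishes if `k = 0` or `ℓ = 0`. -/
theorem chebyshev_OPE_covariance (N k l : ℕ) :
    (1 ≤ k → 1 ≤ l → max k l < N →
      covOPE N (nT k) (nT l) = if k = l then (k : ℝ) / 2 else 0) ∧
    ((k = 0 ∨ l = 0) → covOPE N (nT k) (nT l) = 0) := by
  constructor
  · intro hk hl hmax
    rw [master]
    have hkN : k < N := lt_of_le_of_lt (le_max_left k l) hmax
    have hlN : l < N := lt_of_le_of_lt (le_max_right k l) hmax
    have hcoeff : ∀ i ∈ Finset.range N, ∀ m ∈ Finset.Ico N (N + k + l),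
        coeff k i m * coeff l i m
          = if 1 ≤ i ∧ m = i + k ∧ k = l then (2:ℝ)⁻¹ else 0 := by
      intro i hi m hm
      simp only [Finset.mem_range] at hi
      simp only [Finset.mem_Ico] at hm
      rw [coeff_large k i m (by omega) (by omega), coeff_large l i m (by omega) (by omega)]
      split_ifs with h1 h2 h3 h4 h5 h6 h7 <;>
        first
          | exact inv_sqrt_two_sq
          | omega
          | simp
    rw [Finset.sum_congr rfl (fun i hi => Finset.sum_congr rfl (fun m hm => hcoeff i hi m hm))]
    by_cases hkl : k = l
    · subst hkl
      rw [if_pos rfl]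
      have hinner : ∀ i ∈ Finset.range N,
          (∑ m ∈ Finset.Ico N (N + k + k), if 1 ≤ i ∧ m = i + k ∧ k = k then (2:ℝ)⁻¹ else 0)
            = if 1 ≤ i ∧ N ≤ i + k then (2:ℝ)⁻¹ else 0 := by
        intro i hi
        simp only [Finset.mem_range] at hi
        by_cases h1 : 1 ≤ i
        · simp only [h1, true_and, and_true]
          rw [Finset.sum_ite_eq' (Finset.Ico N (N + k + k)) (i + k) (fun _ => (2:ℝ)⁻¹)]
          simp only [Finset.mem_Ico]
          have : (N ≤ i + k ∧ i + k < N + k + k) ↔ N ≤ i + k := by omega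
          simp only [this]
        · have : ∀ m ∈ Finset.Ico N (N + k + k),
              (if 1 ≤ i ∧ m = i + k ∧ k = k then (2:ℝ)⁻¹ else 0) = 0 := by
            intro m _; rw [if_neg]; tauto
          rw [Finset.sum_congr rfl this, Finset.sum_const_zero, if_neg (by tauto)]
      rw [Finset.sum_congr rfl hinner]
      have hcond : ∀ i ∈ Finset.range N,
          (if 1 ≤ i ∧ N ≤ i + k then (2:ℝ)⁻¹ else 0)
            = if N - k ≤ i then (2:ℝ)⁻¹ else 0 := by
        intro i _
        have : (1 ≤ i ∧ N ≤ i + k) ↔ N - k ≤ i := by omega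
        simp only [this]
      rw [Finset.sum_congr rfl hcond, Finset.sum_ite, Finset.sum_const_zero, add_zero,
        Finset.sum_const]
      have hfilter : Finset.filter (fun i => N - k ≤ i) (Finset.range N)
          = Finset.Ico (N - k) N := by
        ext i
        simp only [Finset.mem_filter, Finset.mem_range, Finset.mem_Ico]
        omega
      rw [hfilter, Nat.card_Ico]
      have : N - (N - k) = k := by omega
      rw [this, nsmul_eq_mul]
      ring
    · rw [if_neg hkl]
      refine Finset.sum_eq_zero fun i _ => Finset.sum_eq_zero fun m _ => ?_
      rw [if_neg]
      tauto
  · intro h0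
    rw [master]
    refine Finset.sum_eq_zero fun i hi => Finset.sum_eq_zero fun m hm => ?_
    simp only [Finset.mem_range] at hi
    simp only [Finset.mem_Ico] at hm
    rcases h0 with rfl | rfl
    · rw [coeff_zero_left, if_neg (by omega), zero_mul]
    · rw [coeff_zero_left, if_neg (by omega), mul_zero]
end

section
/- For an orthogonal polynomial ensemble (x_1,…,x_N) with kernel K_N and reference measure μ, and any Lipschitz function f on [-1,1]^d with Lipschitz constant ‖f‖_Lip (w.r.t. the Euclidean norm), Var[∑_{i=1}^N f(x_i)] ≤ ‖f‖_Lip² ∑_{j=1}^d Var[∑_{i=1}^N e_j(x_i)], where e_j(x) = x_j. -/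
open MeasureTheory

lemma prod_apply_le_lintegral {α : Type*} [MeasurableSpace α] (μ ν : Measure α)
    {A : Set (α × α)} (hA : MeasurableSet A) :
    (μ.prod ν) A ≤ ∫⁻ x, (Measure.map (Prod.mk x) ν) A ∂μ := by
  by_cases hg : AEMeasurable (fun x : α => Measure.map (Prod.mk x) ν) μ
  · rw [Measure.prod, Measure.bind, Measure.join_apply hA,
      lintegral_map' (Measure.measurable_coe hA).aemeasurable hg]
  · rw [Measure.prod, Measure.bind, Measure.map_of_not_aemeasurable hg]
    simp

lemma prod_null_compl {α : Type*} [MeasurableSpace α] (μ ν : Measure α) {S : Set α}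
    (hS : MeasurableSet S) (hμ : μ Sᶜ = 0) (hν : ν Sᶜ = 0) :
    (μ.prod ν) {p : α × α | p.1 ∈ S ∧ p.2 ∈ S}ᶜ = 0 := by
  have h1 : (μ.prod ν) (Sᶜ ×ˢ (Set.univ : Set α)) = 0 := by
    refine le_antisymm ?_ (zero_le)
    refine le_trans (prod_apply_le_lintegral μ ν (hS.compl.prod MeasurableSet.univ)) ?_
    have heq : ∀ x, (Measure.map (Prod.mk x) ν) (Sᶜ ×ˢ (Set.univ : Set α))
        = Sᶜ.indicator (fun _ => ν Set.univ) x := by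
      intro x
      rw [Measure.map_apply measurable_prodMk_left (hS.compl.prod MeasurableSet.univ)]
      by_cases hx : x ∈ Sᶜ
      · simp [Set.indicator_of_mem hx, Set.mk_preimage_prod_right_eq_if, hx]
      · simp [Set.indicator_of_notMem hx, Set.mk_preimage_prod_right_eq_if, hx]
    simp_rw [heq]
    rw [lintegral_indicator hS.compl, setLIntegral_const, hμ, mul_zero]
  have h2 : (μ.prod ν) ((Set.univ : Set α) ×ˢ Sᶜ) = 0 := by
    refine le_antisymm ?_ (zero_le)
    refine le_trans (prod_apply_le_lintegral μ ν (MeasurableSet.univ.prod hS.compl)) ?_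
    have heq : ∀ x, (Measure.map (Prod.mk x) ν) ((Set.univ : Set α) ×ˢ Sᶜ) = 0 := by
      intro x
      rw [Measure.map_apply measurable_prodMk_left (MeasurableSet.univ.prod hS.compl)]
      have : Prod.mk x ⁻¹' ((Set.univ : Set α) ×ˢ Sᶜ) = Sᶜ := by ext y; simp
      rw [this, hν]
    simp_rw [heq]
    simp
  have hsub : {p : α × α | p.1 ∈ S ∧ p.2 ∈ S}ᶜ ⊆
      (Sᶜ ×ˢ (Set.univ : Set α)) ∪ ((Set.univ : Set α) ×ˢ Sᶜ) := by
    intro p hp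
    simp only [Set.mem_compl_iff, Set.mem_setOf_eq, not_and_or] at hp
    rcases hp with h | h
    · left; exact ⟨h, trivial⟩
    · right; exact ⟨trivial, h⟩
  refine le_antisymm ?_ (zero_le)
  calc (μ.prod ν) {p : α × α | p.1 ∈ S ∧ p.2 ∈ S}ᶜ
      ≤ (μ.prod ν) ((Sᶜ ×ˢ (Set.univ : Set α)) ∪ ((Set.univ : Set α) ×ˢ Sᶜ)) :=
        measure_mono hsub
    _ ≤ (μ.prod ν) (Sᶜ ×ˢ (Set.univ : Set α)) + (μ.prod ν) ((Set.univ : Set α) ×ˢ Sᶜ) :=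
        measure_union_le _ _
    _ = 0 := by rw [h1, h2, add_zero]

/-- Lipschitz bound on the variance of a linear statistic of a projection determinantal
point process: if `f` is Lipschitz with constant `c` (w.r.t. the Euclidean norm) on
`[-1,1]^d` and `Var[∑ g(x_i)] = (1/2) ∬ (g(x)−g(y))² K_N(x,y)² dμ dμ`, then
`Var[∑ f(x_i)] ≤ c² ∑_{j=1}^d Var[∑ e_j(x_i)]` where `e_j(x) = x_j`. -/
theorem lipschitz_variance_bound {d : ℕ}
    (μ : Measure (EuclideanSpace ℝ (Fin d)))
    (hsupp : μ {x : EuclideanSpace ℝ (Fin d) | ∀ j, x j ∈ Set.Icc (-1 : ℝ) 1}ᶜ = 0)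
    (φ : ℕ → EuclideanSpace ℝ (Fin d) → ℝ) (N : ℕ)
    (hortho : ∀ k l, ∫ x, φ k x * φ l x ∂μ = if k = l then 1 else 0)
    (K : EuclideanSpace ℝ (Fin d) → EuclideanSpace ℝ (Fin d) → ℝ)
    (hK : ∀ x y, K x y = ∑ k ∈ Finset.range N, φ k x * φ k y)
    (f : EuclideanSpace ℝ (Fin d) → ℝ) (c : NNReal)
    (hf : LipschitzOnWith c f {x : EuclideanSpace ℝ (Fin d) | ∀ j, x j ∈ Set.Icc (-1 : ℝ) 1})
    (hint : ∀ j : Fin d,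
      Integrable (fun p : EuclideanSpace ℝ (Fin d) × EuclideanSpace ℝ (Fin d) =>
        (p.1 j - p.2 j) ^ 2 * (K p.1 p.2) ^ 2) (μ.prod μ)) :
    (1 / 2) * ∫ p, (f p.1 - f p.2) ^ 2 * (K p.1 p.2) ^ 2 ∂(μ.prod μ)
      ≤ (c : ℝ) ^ 2 * ∑ j : Fin d,
          (1 / 2) * ∫ p, (p.1 j - p.2 j) ^ 2 * (K p.1 p.2) ^ 2 ∂(μ.prod μ) := by
  set S : Set (EuclideanSpace ℝ (Fin d)) := {x | ∀ j, x j ∈ Set.Icc (-1 : ℝ) 1} with hSdef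
  have hSmeas : MeasurableSet S := by
    have hSi : S = ⋂ j : Fin d,
        (fun x : EuclideanSpace ℝ (Fin d) => x j) ⁻¹' Set.Icc (-1 : ℝ) 1 := by
      ext x; simp [hSdef]
    rw [hSi]
    exact MeasurableSet.iInter fun j => ((measurable_pi_apply j).comp (WithLp.measurable_ofLp 2 _)) measurableSet_Icc
  -- pointwise bound on S × S
  have hpt : ∀ x ∈ S, ∀ y ∈ S, (f x - f y) ^ 2 * (K x y) ^ 2
      ≤ (c : ℝ) ^ 2 * ∑ j : Fin d, (x j - y j) ^ 2 * (K x y) ^ 2 := by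
    intro x hx y hy
    have hd : dist (f x) (f y) ≤ (c : ℝ) * dist x y := hf.dist_le_mul x hx y hy
    have habs : |f x - f y| ≤ (c : ℝ) * dist x y := by
      rw [← Real.dist_eq]; exact hd
    have h1 : (f x - f y) ^ 2 ≤ (c : ℝ) ^ 2 * dist x y ^ 2 := by
      calc (f x - f y) ^ 2 = |f x - f y| ^ 2 := (sq_abs _).symm
        _ ≤ ((c : ℝ) * dist x y) ^ 2 := by
            exact pow_le_pow_left₀ (abs_nonneg _) habs 2
        _ = (c : ℝ) ^ 2 * dist x y ^ 2 := by ring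
    have h2 : dist x y ^ 2 = ∑ j : Fin d, (x j - y j) ^ 2 := by
      rw [EuclideanSpace.dist_eq, Real.sq_sqrt (Finset.sum_nonneg fun j _ => sq_nonneg _)]
      congr 1
      ext j
      rw [Real.dist_eq, sq_abs]
    have h3 : (f x - f y) ^ 2 ≤ (c : ℝ) ^ 2 * ∑ j : Fin d, (x j - y j) ^ 2 := by
      rw [← h2]; exact h1
    calc (f x - f y) ^ 2 * (K x y) ^ 2
        ≤ ((c : ℝ) ^ 2 * ∑ j : Fin d, (x j - y j) ^ 2) * (K x y) ^ 2 :=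
          mul_le_mul_of_nonneg_right h3 (sq_nonneg _)
      _ = (c : ℝ) ^ 2 * ∑ j : Fin d, (x j - y j) ^ 2 * (K x y) ^ 2 := by
          rw [mul_assoc, Finset.sum_mul]
  have hae : (fun p : EuclideanSpace ℝ (Fin d) × EuclideanSpace ℝ (Fin d) =>
        (f p.1 - f p.2) ^ 2 * (K p.1 p.2) ^ 2)
      ≤ᵐ[μ.prod μ] (fun p =>
        (c : ℝ) ^ 2 * ∑ j : Fin d, (p.1 j - p.2 j) ^ 2 * (K p.1 p.2) ^ 2) := by
    have hnull : (μ.prod μ)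
        {p : EuclideanSpace ℝ (Fin d) × EuclideanSpace ℝ (Fin d) | p.1 ∈ S ∧ p.2 ∈ S}ᶜ = 0 :=
      prod_null_compl μ μ hSmeas hsupp hsupp
    filter_upwards [measure_eq_zero_iff_ae_notMem.mp hnull] with p hp
    simp only [Set.mem_compl_iff, Set.mem_setOf_eq, not_not] at hp
    exact hpt p.1 hp.1 p.2 hp.2
  have hGint : Integrable (fun p : EuclideanSpace ℝ (Fin d) × EuclideanSpace ℝ (Fin d) =>
      (c : ℝ) ^ 2 * ∑ j : Fin d, (p.1 j - p.2 j) ^ 2 * (K p.1 p.2) ^ 2) (μ.prod μ) :=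
    (integrable_finset_sum Finset.univ fun j _ => hint j).const_mul _
  have hGval : (∫ p, (c : ℝ) ^ 2 *
        ∑ j : Fin d, (p.1 j - p.2 j) ^ 2 * (K p.1 p.2) ^ 2 ∂(μ.prod μ))
      = (c : ℝ) ^ 2 * ∑ j : Fin d,
          ∫ p, (p.1 j - p.2 j) ^ 2 * (K p.1 p.2) ^ 2 ∂(μ.prod μ) := by
    rw [integral_const_mul, integral_finset_sum Finset.univ fun j _ => hint j]
  by_cases hFint : Integrable (fun p : EuclideanSpace ℝ (Fin d) × EuclideanSpace ℝ (Fin d) =>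
      (f p.1 - f p.2) ^ 2 * (K p.1 p.2) ^ 2) (μ.prod μ)
  · have hmono := integral_mono_ae hFint hGint hae
    rw [hGval] at hmono
    calc (1 / 2) * ∫ p, (f p.1 - f p.2) ^ 2 * (K p.1 p.2) ^ 2 ∂(μ.prod μ)
        ≤ (1 / 2) * ((c : ℝ) ^ 2 * ∑ j : Fin d,
            ∫ p, (p.1 j - p.2 j) ^ 2 * (K p.1 p.2) ^ 2 ∂(μ.prod μ)) := by linarith
      _ = (c : ℝ) ^ 2 * ∑ j : Fin d,
            (1 / 2) * ∫ p, (p.1 j - p.2 j) ^ 2 * (K p.1 p.2) ^ 2 ∂(μ.prod μ) := by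
          rw [Finset.mul_sum, Finset.mul_sum, Finset.mul_sum]
          congr 1
          ext j
          ring
  · rw [integral_undef hFint, mul_zero]
    refine mul_nonneg (sq_nonneg _) (Finset.sum_nonneg fun j _ => ?_)
    refine mul_nonneg (by norm_num) (integral_nonneg fun p => ?_)
    exact mul_nonneg (sq_nonneg _) (sq_nonneg _)
end

section
/- Let k ∈ ℕ^d with k ≠ 0, S = {j : k_j ≠ 0}, P ⊆ S, and M > max_j k_j. Define C_M[P] as the set of n ∈ {0,…,M−1}^d such that: 1 ≤ n_j ≤ M−1 for j ∈ P, k_j < n_j ≤ M−1 for j ∈ S∖P, and n_p ≥ M − k_p for at least one p ∈ P. Then |C_M[P]| = (∑_{j∈P} k_j) M^{d−1} + O(M^{d−2}) as M → ∞. -/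
open Finset


open Finset

lemma myaux_prod_nonneg_sub {ι : Type*} (s : Finset ι) (a b : ι → ℝ)
    (h0 : ∀ i ∈ s, 0 ≤ b i) (hba : ∀ i ∈ s, b i ≤ a i) :
    (0:ℝ) ≤ ∏ i ∈ s, a i - ∏ i ∈ s, b i :=
  sub_nonneg.2 (Finset.prod_le_prod h0 hba)

lemma myaux_prod_sub_prod_le {ι : Type*} (s : Finset ι) (a b : ι → ℝ) (M : ℝ)
    (h0 : ∀ i ∈ s, 0 ≤ b i) (hba : ∀ i ∈ s, b i ≤ a i) (haM : ∀ i ∈ s, a i ≤ M) :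
    ∏ i ∈ s, a i - ∏ i ∈ s, b i ≤ (∑ i ∈ s, (a i - b i)) * M ^ (s.card - 1) := by
  classical
  induction s using Finset.induction_on with
  | empty => simp
  | @insert j s hj ih =>
    have h0' : ∀ i ∈ s, 0 ≤ b i := fun i hi => h0 i (mem_insert_of_mem hi)
    have hba' : ∀ i ∈ s, b i ≤ a i := fun i hi => hba i (mem_insert_of_mem hi)
    have haM' : ∀ i ∈ s, a i ≤ M := fun i hi => haM i (mem_insert_of_mem hi)
    have hbj : 0 ≤ b j := h0 j (mem_insert_self j s)
    have haj : b j ≤ a j := hba j (mem_insert_self j s)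
    have hMj : a j ≤ M := haM j (mem_insert_self j s)
    rw [Finset.prod_insert hj, Finset.prod_insert hj, Finset.sum_insert hj,
      Finset.card_insert_of_notMem hj]
    have key : a j * ∏ i ∈ s, a i - b j * ∏ i ∈ s, b i
        = a j * (∏ i ∈ s, a i - ∏ i ∈ s, b i) + (a j - b j) * ∏ i ∈ s, b i := by ring
    rw [key]
    have hprodb_nonneg : (0:ℝ) ≤ ∏ i ∈ s, b i := Finset.prod_nonneg h0'
    have hprodbM : ∏ i ∈ s, b i ≤ M ^ s.card := by
      calc ∏ i ∈ s, b i ≤ ∏ i ∈ s, M :=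
            Finset.prod_le_prod h0' (fun i hi => le_trans (hba' i hi) (haM' i hi))
        _ = M ^ s.card := by rw [Finset.prod_const]
    have hnn : (0:ℝ) ≤ ∏ i ∈ s, a i - ∏ i ∈ s, b i := myaux_prod_nonneg_sub s a b h0' hba'
    have haj0 : (0:ℝ) ≤ a j := le_trans hbj haj
    have hsum0 : (0:ℝ) ≤ ∑ i ∈ s, (a i - b i) :=
      Finset.sum_nonneg (fun i hi => sub_nonneg.2 (hba' i hi))
    have h1 : a j * (∏ i ∈ s, a i - ∏ i ∈ s, b i)
        ≤ (∑ i ∈ s, (a i - b i)) * M ^ s.card := by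
      rcases Finset.eq_empty_or_nonempty s with rfl | hs
      · simp
      · have hc : 1 ≤ s.card := Finset.Nonempty.card_pos hs
        have hM0 : (0:ℝ) ≤ M := le_trans haj0 hMj
        calc a j * (∏ i ∈ s, a i - ∏ i ∈ s, b i)
            ≤ M * ((∑ i ∈ s, (a i - b i)) * M ^ (s.card - 1)) := by
              apply mul_le_mul hMj (ih h0' hba' haM') hnn hM0
          _ = (∑ i ∈ s, (a i - b i)) * (M * M ^ (s.card - 1)) := by ring
          _ = (∑ i ∈ s, (a i - b i)) * M ^ s.card := by
              rw [← pow_succ']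
              congr 2
              omega
    have h2 : (a j - b j) * ∏ i ∈ s, b i ≤ (a j - b j) * M ^ s.card :=
      mul_le_mul_of_nonneg_left hprodbM (sub_nonneg.2 haj)
    have : (insert j s).card - 1 = s.card := by
      rw [Finset.card_insert_of_notMem hj]; omega
    calc a j * (∏ i ∈ s, a i - ∏ i ∈ s, b i) + (a j - b j) * ∏ i ∈ s, b i
        ≤ (∑ i ∈ s, (a i - b i)) * M ^ s.card + (a j - b j) * M ^ s.card :=
          add_le_add h1 h2
      _ = (a j - b j + ∑ i ∈ s, (a i - b i)) * M ^ (s.card + 1 - 1) := by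
          simp; ring

lemma myaux_le_prod_sub_prod {ι : Type*} (s : Finset ι) (a b : ι → ℝ) (L : ℝ)
    (hL : 0 ≤ L) (hLb : ∀ i ∈ s, L ≤ b i) (hba : ∀ i ∈ s, b i ≤ a i) :
    (∑ i ∈ s, (a i - b i)) * L ^ (s.card - 1) ≤ ∏ i ∈ s, a i - ∏ i ∈ s, b i := by
  classical
  induction s using Finset.induction_on with
  | empty => simp
  | @insert j s hj ih =>
    have hLb' : ∀ i ∈ s, L ≤ b i := fun i hi => hLb i (mem_insert_of_mem hi)
    have hba' : ∀ i ∈ s, b i ≤ a i := fun i hi => hba i (mem_insert_of_mem hi)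
    have h0' : ∀ i ∈ s, 0 ≤ b i := fun i hi => le_trans hL (hLb' i hi)
    have hbj : L ≤ b j := hLb j (mem_insert_self j s)
    have haj : b j ≤ a j := hba j (mem_insert_self j s)
    rw [Finset.prod_insert hj, Finset.prod_insert hj, Finset.sum_insert hj,
      Finset.card_insert_of_notMem hj]
    have key : a j * ∏ i ∈ s, a i - b j * ∏ i ∈ s, b i
        = a j * (∏ i ∈ s, a i - ∏ i ∈ s, b i) + (a j - b j) * ∏ i ∈ s, b i := by ring
    rw [key]
    have hprodbL : L ^ s.card ≤ ∏ i ∈ s, b i := by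
      calc L ^ s.card = ∏ _i ∈ s, L := by rw [Finset.prod_const]
        _ ≤ ∏ i ∈ s, b i := Finset.prod_le_prod (fun i _ => hL) hLb'
    have hnn : (0:ℝ) ≤ ∏ i ∈ s, a i - ∏ i ∈ s, b i := myaux_prod_nonneg_sub s a b h0' hba'
    have haj0 : L ≤ a j := le_trans hbj haj
    have hsum0 : (0:ℝ) ≤ ∑ i ∈ s, (a i - b i) :=
      Finset.sum_nonneg (fun i hi => sub_nonneg.2 (hba' i hi))
    have h1 : (∑ i ∈ s, (a i - b i)) * L ^ s.card
        ≤ a j * (∏ i ∈ s, a i - ∏ i ∈ s, b i) := by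
      rcases Finset.eq_empty_or_nonempty s with rfl | hs
      · simp
      · have hc : 1 ≤ s.card := Finset.Nonempty.card_pos hs
        calc (∑ i ∈ s, (a i - b i)) * L ^ s.card
            = L * ((∑ i ∈ s, (a i - b i)) * L ^ (s.card - 1)) := by
              conv_lhs => rw [show s.card = (s.card - 1) + 1 by omega]
              ring
          _ ≤ a j * (∏ i ∈ s, a i - ∏ i ∈ s, b i) := by
              apply mul_le_mul haj0 (ih hLb' hba') (by positivity) (le_trans hL haj0)
    have h2 : (a j - b j) * L ^ s.card ≤ (a j - b j) * ∏ i ∈ s, b i :=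
      mul_le_mul_of_nonneg_left hprodbL (sub_nonneg.2 haj)
    calc (a j - b j + ∑ i ∈ s, (a i - b i)) * L ^ (s.card + 1 - 1)
        = (∑ i ∈ s, (a i - b i)) * L ^ s.card + (a j - b j) * L ^ s.card := by
          simp; ring
      _ ≤ a j * (∏ i ∈ s, a i - ∏ i ∈ s, b i) + (a j - b j) * ∏ i ∈ s, b i :=
          add_le_add h1 h2

lemma myaux_pow_sub_pow_le {x y : ℝ} (hy : 0 ≤ y) (hxy : y ≤ x) :
    ∀ n : ℕ, x ^ n - y ^ n ≤ n * (x - y) * x ^ (n - 1) := by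
  intro n
  induction n with
  | zero => simp
  | succ n ih =>
    have hx : 0 ≤ x := le_trans hy hxy
    have key : x ^ (n + 1) - y ^ (n + 1)
        = x * (x ^ n - y ^ n) + (x - y) * y ^ n := by ring
    rw [key]
    have h1 : x * (x ^ n - y ^ n) ≤ (n : ℝ) * (x - y) * x ^ n := by
      rcases Nat.eq_zero_or_pos n with rfl | hn
      · simp
      · calc x * (x ^ n - y ^ n) ≤ x * ((n : ℝ) * (x - y) * x ^ (n - 1)) := by
              apply mul_le_mul_of_nonneg_left ih hx
          _ = (n : ℝ) * (x - y) * (x * x ^ (n - 1)) := by ring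
          _ = (n : ℝ) * (x - y) * x ^ n := by
              rw [← pow_succ']; congr 2; omega
    have h2 : (x - y) * y ^ n ≤ (x - y) * x ^ n :=
      mul_le_mul_of_nonneg_left (pow_le_pow_left₀ hy hxy n) (sub_nonneg.2 hxy)
    push_cast
    calc x * (x ^ n - y ^ n) + (x - y) * y ^ n
        ≤ (n : ℝ) * (x - y) * x ^ n + (x - y) * x ^ n := add_le_add h1 h2
      _ = ((n : ℝ) + 1) * (x - y) * x ^ (n + 1 - 1) := by simp; ring


/-- The set `C_M[P]` of `n ∈ {0,…,M−1}^d` with `1 ≤ n_j ≤ M−1` for `j ∈ P`,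
`k_j < n_j ≤ M−1` for `j ∈ S∖P` (where `S = {j : k_j ≠ 0}`), and `n_p ≥ M − k_p` for at
least one `p ∈ P`. -/
def CMP {d : ℕ} (k : Fin d → ℕ) (P : Finset (Fin d)) (M : ℕ) : Finset (Fin d → ℕ) :=
  (Fintype.piFinset fun _ : Fin d => Finset.range M).filter
    (fun n => (∀ j ∈ P, 1 ≤ n j) ∧
      (∀ j : Fin d, k j ≠ 0 → j ∉ P → k j < n j) ∧
      ∃ p ∈ P, M - k p ≤ n p)


lemma myaux_card_CMP {d : ℕ} (k : Fin d → ℕ) (P : Finset (Fin d)) (M : ℕ)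
    (hM : ∀ j, k j < M) :
    (CMP k P M).card =
      (∏ j, (M - (if j ∈ P then 1 else if k j = 0 then 0 else k j + 1))) -
      ∏ j, ((if j ∈ P then M - k j else M) -
        (if j ∈ P then 1 else if k j = 0 then 0 else k j + 1)) := by
  classical
  set lo : Fin d → ℕ := fun j => if j ∈ P then 1 else if k j = 0 then 0 else k j + 1 with hlo
  set hi : Fin d → ℕ := fun j => if j ∈ P then M - k j else M with hhi
  have hloM : ∀ j, lo j ≤ M := by
    intro j
    have := hM j
    simp only [hlo]
    split
    · omega
    · split
      · omega
      · exact hM j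
  have hhiM : ∀ j, hi j ≤ M := by
    intro j
    simp only [hhi]
    split <;> omega
  have hBA : Fintype.piFinset (fun j => Finset.Ico (lo j) (hi j)) ⊆
      Fintype.piFinset (fun j => Finset.Ico (lo j) M) :=
    Fintype.piFinset_subset _ _ (fun j => Finset.Ico_subset_Ico_right (hhiM j))
  have hset : CMP k P M = Fintype.piFinset (fun j => Finset.Ico (lo j) M) \
      Fintype.piFinset (fun j => Finset.Ico (lo j) (hi j)) := by
    ext n
    simp only [CMP, Finset.mem_filter, Fintype.mem_piFinset, Finset.mem_range,
      Finset.mem_sdiff, Finset.mem_Ico]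
    constructor
    · rintro ⟨hrange, h1, h2, p, hp, hple⟩
      refine ⟨fun j => ⟨?_, hrange j⟩, ?_⟩
      · simp only [hlo]
        split
        · exact h1 j ‹_›
        · split
          · omega
          · exact h2 j ‹_› ‹_›
      · intro hall
        have := (hall p).2
        simp only [hhi, if_pos hp] at this
        omega
    · rintro ⟨hA, hB⟩
      push_neg at hB
      obtain ⟨j, hj⟩ := hB
      have hjlo := (hA j).1
      have hjhi : hi j ≤ n j := hj hjlo
      have hjP : j ∈ P := by
        by_contra hjP
        simp only [hhi, if_neg hjP] at hjhi
        exact absurd (hA j).2 (by omega)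
      refine ⟨fun j' => (hA j').2, fun j' hj' => ?_, fun j' hk' hj' => ?_, j, hjP, ?_⟩
      · have := (hA j').1
        simp only [hlo, if_pos hj'] at this
        exact this
      · have := (hA j').1
        simp only [hlo, if_neg hj', if_neg hk'] at this
        omega
      · simpa only [hhi, if_pos hjP] using hjhi
  rw [hset, Finset.card_sdiff_of_subset hBA, Fintype.card_piFinset, Fintype.card_piFinset]
  simp only [Nat.card_Ico]
  rfl


/-- Counting asymptotics: for `k ∈ ℕ^d`, `k ≠ 0`, `P ⊆ S = {j : k_j ≠ 0}`, one has
`|C_M[P]| = (∑_{j∈P} k_j) M^{d−1} + O(M^{d−2})` as `M → ∞`. -/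
theorem card_CMP_asymptotics {d : ℕ} (k : Fin d → ℕ) (hk : k ≠ 0)
    (P : Finset (Fin d)) (hP : ∀ j ∈ P, k j ≠ 0) :
    ∃ C : ℝ, ∀ M : ℕ, (∀ j, k j < M) →
      |((CMP k P M).card : ℝ) - (∑ j ∈ P, (k j : ℝ)) * (M : ℝ) ^ (d - 1)|
        ≤ C * (M : ℝ) ^ (d - 2) := by
  classical
  obtain ⟨j0, hj0⟩ : ∃ j, k j ≠ 0 := by
    by_contra h
    push_neg at h
    exact hk (funext h)
  set K : ℕ := Finset.univ.sup k + 1 with hK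
  set S : ℝ := ∑ j ∈ P, (k j : ℝ) with hSdef
  have hS0 : (0:ℝ) ≤ S := Finset.sum_nonneg (fun j _ => Nat.cast_nonneg _)
  refine ⟨S * d * K, fun M hM => ?_⟩
  have hM0 : 0 < M := lt_of_le_of_lt (Nat.zero_le _) (hM j0)
  have hKM : K ≤ M := by
    have hsup : Finset.univ.sup k < M :=
      (Finset.sup_lt_iff hM0).2 (fun j _ => hM j)
    omega
  -- the ℕ-valued side lengths
  set lo : Fin d → ℕ := fun j => if j ∈ P then 1 else if k j = 0 then 0 else k j + 1 with hlo
  set hi : Fin d → ℕ := fun j => if j ∈ P then M - k j else M with hhi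
  have hkK : ∀ j, k j + 1 ≤ K := fun j => by
    have : k j ≤ Finset.univ.sup k := Finset.le_sup (Finset.mem_univ j)
    omega
  have hloM : ∀ j, lo j ≤ M := by
    intro j
    have := hM j
    simp only [hlo]
    split
    · omega
    · split <;> omega
  have hlohi : ∀ j, lo j ≤ hi j := by
    intro j
    have := hM j
    have := hloM j
    simp only [hlo, hhi]
    split <;> [skip; split] <;> omega
  have hhiM : ∀ j, hi j ≤ M := by
    intro j
    simp only [hhi]
    split <;> omega
  -- real side lengths
  set a : Fin d → ℝ := fun j => ((M - lo j : ℕ) : ℝ) with ha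
  set b : Fin d → ℝ := fun j => ((hi j - lo j : ℕ) : ℝ) with hb
  have hbnd : ∀ j, ((M:ℝ) - K ≤ b j ∧ b j ≤ a j) ∧ a j ≤ M := by
    intro j
    have h1 := hM j
    have h2 := hkK j
    have h3 := hloM j
    have h4 := hlohi j
    have h5 := hhiM j
    have hblow : M - K ≤ hi j - lo j := by
      simp only [hhi, hlo]
      split <;> [skip; split] <;> omega
    refine ⟨⟨?_, ?_⟩, ?_⟩
    · calc (M:ℝ) - K = ((M - K : ℕ) : ℝ) := by
            rw [Nat.cast_sub hKM]
        _ ≤ b j := Nat.cast_le.2 hblow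
    · exact Nat.cast_le.2 (by omega)
    · exact Nat.cast_le.2 (by omega)
  have hsumc : ∑ j : Fin d, (a j - b j) = S := by
    have : ∀ j : Fin d, a j - b j = if j ∈ P then (k j : ℝ) else 0 := by
      intro j
      have h1 := hM j
      have h3 := hloM j
      have h4 := hlohi j
      simp only [ha, hb]
      rw [Nat.cast_sub h3, Nat.cast_sub h4]
      have : ((hi j : ℕ) : ℝ) = if j ∈ P then (M:ℝ) - k j else (M:ℝ) := by
        simp only [hhi]
        split
        · rw [Nat.cast_sub (le_of_lt h1)]
        · rfl
      rw [this]
      split <;> ring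
    rw [Finset.sum_congr rfl (fun j _ => this j), Finset.sum_ite_mem,
      Finset.univ_inter]
  -- exact cardinality
  have hcard : ((CMP k P M).card : ℝ) = ∏ j, a j - ∏ j, b j := by
    rw [myaux_card_CMP k P M hM]
    have hprodle : (∏ j, (hi j - lo j)) ≤ ∏ j, (M - lo j) :=
      Finset.prod_le_prod' (fun j _ => by have := hhiM j; omega)
    rw [Nat.cast_sub hprodle]
    push_cast
    rfl
  have hd : (Finset.univ : Finset (Fin d)).card = d := by
    rw [Finset.card_univ, Fintype.card_fin]
  have hub : ∏ j, a j - ∏ j, b j ≤ S * (M:ℝ) ^ (d - 1) := by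
    have := myaux_prod_sub_prod_le Finset.univ a b (M:ℝ)
      (fun j _ => Nat.cast_nonneg _) (fun j _ => (hbnd j).1.2) (fun j _ => (hbnd j).2)
    rwa [hd, hsumc] at this
  have hL0 : (0:ℝ) ≤ (M:ℝ) - K := by
    have : (K:ℝ) ≤ M := Nat.cast_le.2 hKM
    linarith
  have hlb : S * ((M:ℝ) - K) ^ (d - 1) ≤ ∏ j, a j - ∏ j, b j := by
    have := myaux_le_prod_sub_prod Finset.univ a b ((M:ℝ) - K) hL0
      (fun j _ => (hbnd j).1.1) (fun j _ => (hbnd j).1.2)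
    rwa [hd, hsumc] at this
  have hpow : (M:ℝ) ^ (d - 1) - ((M:ℝ) - K) ^ (d - 1)
      ≤ ((d - 1 : ℕ) : ℝ) * K * (M:ℝ) ^ (d - 2) := by
    have h := myaux_pow_sub_pow_le hL0 (by linarith : (M:ℝ) - K ≤ M) (d - 1)
    have he : d - 1 - 1 = d - 2 := by omega
    rw [he] at h
    calc (M:ℝ) ^ (d - 1) - ((M:ℝ) - K) ^ (d - 1)
        ≤ ((d - 1 : ℕ) : ℝ) * ((M:ℝ) - ((M:ℝ) - K)) * (M:ℝ) ^ (d - 2) := h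
      _ = ((d - 1 : ℕ) : ℝ) * K * (M:ℝ) ^ (d - 2) := by ring
  rw [hcard, abs_sub_comm, abs_of_nonneg (by linarith)]
  have hd1d : ((d - 1 : ℕ) : ℝ) ≤ (d : ℝ) := Nat.cast_le.2 (Nat.sub_le d 1)
  have hMpow : (0:ℝ) ≤ (M:ℝ) ^ (d - 2) := by positivity
  have hK0 : (0:ℝ) ≤ (K:ℝ) := Nat.cast_nonneg _
  have step : S * (M:ℝ) ^ (d - 1) - (∏ j, a j - ∏ j, b j)
      ≤ S * (((d - 1 : ℕ) : ℝ) * K * (M:ℝ) ^ (d - 2)) := by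
    have h1 : S * (M:ℝ) ^ (d - 1) - (∏ j, a j - ∏ j, b j)
        ≤ S * ((M:ℝ) ^ (d - 1) - ((M:ℝ) - K) ^ (d - 1)) := by
      rw [mul_sub]
      linarith [hlb]
    calc S * (M:ℝ) ^ (d - 1) - (∏ j, a j - ∏ j, b j)
        ≤ S * ((M:ℝ) ^ (d - 1) - ((M:ℝ) - K) ^ (d - 1)) := h1
      _ ≤ S * (((d - 1 : ℕ) : ℝ) * K * (M:ℝ) ^ (d - 2)) :=
          mul_le_mul_of_nonneg_left hpow hS0
  calc S * (M:ℝ) ^ (d - 1) - (∏ j, a j - ∏ j, b j)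
      ≤ S * (((d - 1 : ℕ) : ℝ) * K * (M:ℝ) ^ (d - 2)) := step
    _ = ((d - 1 : ℕ) : ℝ) * (S * K * (M:ℝ) ^ (d - 2)) := by ring
    _ ≤ (d : ℝ) * (S * K * (M:ℝ) ^ (d - 2)) :=
        mul_le_mul_of_nonneg_right hd1d (mul_nonneg (mul_nonneg hS0 hK0) hMpow)
    _ = S * d * K * (M:ℝ) ^ (d - 2) := by ring
end
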